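/- For every prime number p ≥ 5 there exist p² pairwise distinct lines in ℙ²(ℂ) having exactly (p²−1)(p²−2)/6 triple points, exactly p²−1 double points, and no point of multiplicity greater than 3. -/

import Mathlib

/-- The projective plane over `F` (also used, by duality, for the lines of that plane). -/
abbrev ProjPlane (F : Type*) [Field F] := Projectivization F (Fin 3 → F)

/-- The point `P` lies on the line `L` (a line is recorded by the projective class of the
coefficient vector of a defining linear form): the pairing of representatives vanishes.
This does not depend on the choice of representatives. -/
def OnLine {F : Type*} [Field F] (P L : ProjPlane F) : Prop :=
  dotProduct P.rep L.rep = 0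

/-- The multiplicity of a point `P` with respect to a configuration `lines`:
the number of lines of the configuration passing through `P`. -/
noncomputable def mult {F : Type*} [Field F] (lines : Set (ProjPlane F))
    (P : ProjPlane F) : ℕ :=
  {L ∈ lines | OnLine P L}.ncard


noncomputable section MTsection

namespace MT

variable {n : ℕ} [NeZero n] {ζ : ℂ}

def f (ζ : ℂ) (k : ZMod n) : ℂ := ζ ^ k.val

lemma f_ne_zero (hζ : IsPrimitiveRoot ζ n) (k : ZMod n) : f ζ k ≠ 0 :=
  pow_ne_zero _ (hζ.ne_zero (NeZero.ne n))

lemma f_zero (hζ : IsPrimitiveRoot ζ n) : f ζ (0 : ZMod n) = 1 := by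
  simp [f, ZMod.val_zero]

lemma f_add (hζ : IsPrimitiveRoot ζ n) (j k : ZMod n) :
    f ζ (j + k) = f ζ j * f ζ k := by
  have h : ζ ^ ((j.val + k.val) % n) = ζ ^ (j.val + k.val) := by
    conv_rhs => rw [← Nat.div_add_mod (j.val + k.val) n]
    rw [pow_add, pow_mul, hζ.pow_eq_one, one_pow, one_mul]
  rw [f, ZMod.val_add, h, pow_add]; rfl

lemma f_inj (hζ : IsPrimitiveRoot ζ n) : Function.Injective (f (n := n) ζ) := by
  intro j k h
  have := hζ.pow_inj (ZMod.val_lt j) (ZMod.val_lt k) h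
  exact ZMod.val_injective n this


def vec (t : ℂ) : Fin 3 → ℂ := ![t, t ^ 2, t ^ 3 - 1]

lemma vec_ne_zero (t : ℂ) : vec t ≠ 0 := by
  intro h
  by_cases ht : t = 0
  · have h2 := congrFun h 2
    simp [vec, ht] at h2
  · have h0 := congrFun h 0
    simp [vec, ht] at h0

def Lmap (ζ : ℂ) (k : ZMod n) : ProjPlane ℂ :=
  Projectivization.mk ℂ (vec (f ζ k)) (vec_ne_zero _)

lemma dot_vec (r : Fin 3 → ℂ) (t : ℂ) :
    dotProduct r (vec t) = r 2 * t ^ 3 + r 1 * t ^ 2 + r 0 * t - r 2 := by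
  simp [dotProduct, Fin.sum_univ_three, vec]; ring

lemma exists_smul_rep (v : Fin 3 → ℂ) (hv : v ≠ 0) :
    ∃ c : ℂˣ, (Projectivization.mk ℂ v hv).rep = (c : ℂ) • v := by
  have h := Projectivization.mk_rep (Projectivization.mk ℂ v hv)
  rw [Projectivization.mk_eq_mk_iff] at h
  obtain ⟨a, ha⟩ := h
  exact ⟨a, ha.symm⟩

lemma Lmap_inj (hζ : IsPrimitiveRoot ζ n) : Function.Injective (Lmap (n := n) ζ) := by
  intro j k h
  rw [Lmap, Lmap, Projectivization.mk_eq_mk_iff] at h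
  obtain ⟨a, ha⟩ := h
  have h0 := congrFun ha 0
  have h1 := congrFun ha 1
  simp [vec] at h0 h1
  apply f_inj hζ
  have h0' : (a : ℂ) * f ζ k = f ζ j := by
    simpa [Units.smul_def, smul_eq_mul] using h0
  have h1' : (a : ℂ) * f ζ k ^ 2 = f ζ j ^ 2 := by
    simpa [Units.smul_def, smul_eq_mul] using h1
  have hz : f ζ j * (f ζ j - f ζ k) = 0 := by
    linear_combination f ζ k * h0' - h1'
  rcases mul_eq_zero.mp hz with h | h
  · exact absurd h (f_ne_zero hζ j)
  · exact sub_eq_zero.mp h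

lemma onLine_iff (Q : ProjPlane ℂ) (v : Fin 3 → ℂ) (hv : v ≠ 0) :
    OnLine Q (Projectivization.mk ℂ v hv) ↔ dotProduct Q.rep v = 0 := by
  obtain ⟨c, hc⟩ := exists_smul_rep v hv
  rw [OnLine, hc, dotProduct_smul]
  simp [smul_eq_mul, Units.ne_zero c]

lemma mult_eq (hζ : IsPrimitiveRoot ζ n) (Q : ProjPlane ℂ) :
    mult (Set.range (Lmap (n := n) ζ)) Q
      = {k : ZMod n | dotProduct Q.rep (vec (f ζ k)) = 0}.ncard := by
  rw [mult]
  have hset : {L ∈ Set.range (Lmap (n := n) ζ) | OnLine Q L}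
      = Lmap ζ '' {k : ZMod n | dotProduct Q.rep (vec (f ζ k)) = 0} := by
    ext L
    constructor
    · rintro ⟨⟨k, rfl⟩, hL⟩
      exact ⟨k, (onLine_iff Q _ _).mp hL, rfl⟩
    · rintro ⟨k, hk, rfl⟩
      exact ⟨⟨k, rfl⟩, (onLine_iff Q _ _).mpr hk⟩
  rw [hset, Set.ncard_image_of_injective _ (Lmap_inj hζ)]

lemma mult_mk (hζ : IsPrimitiveRoot ζ n) (u : Fin 3 → ℂ) (hu : u ≠ 0) :
    mult (Set.range (Lmap (n := n) ζ)) (Projectivization.mk ℂ u hu)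
      = {k : ZMod n | dotProduct u (vec (f ζ k)) = 0}.ncard := by
  rw [mult_eq hζ]
  obtain ⟨c, hc⟩ := exists_smul_rep u hu
  congr 1
  ext k
  rw [Set.mem_setOf_eq, Set.mem_setOf_eq, hc, smul_dotProduct]
  simp [smul_eq_mul, Units.ne_zero c]


-- the cubic polynomial attached to a coefficient vector
lemma ncard_roots_le (u : Fin 3 → ℂ) (hu : u ≠ 0) (hζ : IsPrimitiveRoot ζ n) :
    {k : ZMod n | dotProduct u (vec (f ζ k)) = 0}.ncard ≤ 3 := by
  classical
  set P : Polynomial ℂ :=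
    Polynomial.C (u 2) * Polynomial.X ^ 3 + Polynomial.C (u 1) * Polynomial.X ^ 2
      + Polynomial.C (u 0) * Polynomial.X - Polynomial.C (u 2) with hP
  have hPeval : ∀ t : ℂ, P.eval t = dotProduct u (vec t) := by
    intro t
    rw [dot_vec]
    simp [hP]
  have hPne : P ≠ 0 := by
    intro h
    apply hu
    have c3 : P.coeff 3 = u 2 := by simp [hP, Polynomial.coeff_X_pow]
    have c2 : P.coeff 2 = u 1 := by simp [hP, Polynomial.coeff_X_pow]
    have c1 : P.coeff 1 = u 0 := by simp [hP, Polynomial.coeff_X_pow]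
    rw [h] at c3 c2 c1
    simp only [Polynomial.coeff_zero] at c3 c2 c1
    funext i
    fin_cases i <;> simp [← c1, ← c2, ← c3]
  have hdeg : P.natDegree ≤ 3 := by
    rw [hP]
    compute_degree
  have hsub : f ζ '' {k : ZMod n | dotProduct u (vec (f ζ k)) = 0}
      ⊆ ↑P.roots.toFinset := by
    rintro x ⟨k, hk, rfl⟩
    simp only [Finset.coe_sort_coe, Multiset.mem_toFinset, Finset.mem_coe]
    rw [Polynomial.mem_roots hPne, Polynomial.IsRoot, hPeval]
    exact hk
  calc {k : ZMod n | dotProduct u (vec (f ζ k)) = 0}.ncard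
      = (f ζ '' {k : ZMod n | dotProduct u (vec (f ζ k)) = 0}).ncard :=
        (Set.ncard_image_of_injective _ (f_inj hζ)).symm
    _ ≤ (↑P.roots.toFinset : Set ℂ).ncard := Set.ncard_le_ncard hsub (P.roots.toFinset.finite_toSet)
    _ ≤ 3 := by
        rw [Set.ncard_coe_finset]
        exact le_trans (Multiset.toFinset_card_le _) (le_trans (Polynomial.card_roots' P) hdeg)


/-- coefficient vector of the monic cubic with roots x,y,z (product 1). -/
def pt (x y z : ℂ) : Fin 3 → ℂ := ![x*y + x*z + y*z, -(x + y + z), 1]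

lemma pt_ne_zero (x y z : ℂ) : pt x y z ≠ 0 := by
  intro h
  have h2 := congrFun h 2
  simp [pt] at h2

lemma dot_pt {x y z : ℂ} (h : x * y * z = 1) (t : ℂ) :
    dotProduct (pt x y z) (vec t) = (t - x) * (t - y) * (t - z) := by
  rw [dot_vec]
  simp only [pt, Matrix.cons_val_zero, Matrix.cons_val_one, Matrix.head_cons, Matrix.cons_val_two, Matrix.tail_cons]
  linear_combination h

def Psi (ζ : ℂ) (a b c : ZMod n) : ProjPlane ℂ :=
  Projectivization.mk ℂ (pt (f ζ a) (f ζ b) (f ζ c)) (pt_ne_zero _ _ _)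

lemma prod_f (hζ : IsPrimitiveRoot ζ n) {a b c : ZMod n} (h : a + b + c = 0) :
    f ζ a * f ζ b * f ζ c = 1 := by
  rw [← f_add hζ, ← f_add hζ, h, f_zero hζ]

lemma mult_Psi (hζ : IsPrimitiveRoot ζ n) {a b c : ZMod n}
    (hab : a ≠ b) (hac : a ≠ c) (hbc : b ≠ c) (hsum : a + b + c = 0) :
    mult (Set.range (Lmap (n := n) ζ)) (Psi ζ a b c) = 3 := by
  rw [Psi, mult_mk hζ]
  have hprod := prod_f hζ hsum
  have hset : {k : ZMod n | dotProduct (pt (f ζ a) (f ζ b) (f ζ c)) (vec (f ζ k)) = 0}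
      = {a, b, c} := by
    ext k
    rw [Set.mem_setOf_eq, dot_pt hprod]
    simp only [mul_eq_zero, sub_eq_zero, Set.mem_insert_iff, Set.mem_singleton_iff]
    constructor
    · rintro ((h | h) | h)
      · exact Or.inl (f_inj hζ h)
      · exact Or.inr (Or.inl (f_inj hζ h))
      · exact Or.inr (Or.inr (f_inj hζ h))
    · rintro (rfl | rfl | rfl)
      · exact Or.inl (Or.inl rfl)
      · exact Or.inl (Or.inr rfl)
      · exact Or.inr rfl
  rw [hset]
  rw [Set.ncard_eq_three]
  exact ⟨a, b, c, hab, hac, hbc, rfl⟩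

/-- key factorization of the cubic attached to `r` with two known distinct roots. -/
lemma factor (r : Fin 3 → ℂ) (hr2 : r 2 ≠ 0) {x y : ℂ} (hxy : x ≠ y)
    (hx : dotProduct r (vec x) = 0) (hy : dotProduct r (vec y) = 0) :
    ∃ w : ℂ, (∀ t : ℂ, dotProduct r (vec t) = r 2 * ((t - x) * (t - y) * (t - w)))
      ∧ x * y * w = 1
      ∧ r 0 = r 2 * (x*y + x*w + y*w) ∧ r 1 = -(r 2 * (x + y + w)) := by
  set w : ℂ := -(r 1)/(r 2) - x - y with hw
  set α : ℂ := r 0 - r 2 * (x*y + x*w + y*w) with hα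
  set β : ℂ := r 2 * (x*y*w) - r 2 with hβ
  have id0 : ∀ t : ℂ, dotProduct r (vec t)
      = r 2 * ((t - x) * (t - y) * (t - w)) + (α * t + β) := by
    intro t
    rw [dot_vec, hα, hβ, hw]
    field_simp
    ring
  have hax : α * x + β = 0 := by
    have h := id0 x
    rw [hx] at h
    linear_combination -h
  have hay : α * y + β = 0 := by
    have h := id0 y
    rw [hy] at h
    linear_combination -h
  have h5 : α * (x - y) = 0 := by linear_combination hax - hay
  have hα0 : α = 0 := by
    rcases mul_eq_zero.mp h5 with h | h
    · exact h
    · exact absurd (sub_eq_zero.mp h) hxy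
  have hβ0 : β = 0 := by linear_combination hax - x * hα0
  refine ⟨w, ?_, ?_, ?_, ?_⟩
  · intro t
    have := id0 t
    rw [hα0, hβ0] at this
    simpa using this
  · have h6 : r 2 * (x*y*w) = r 2 * 1 := by linear_combination hβ0
    exact mul_left_cancel₀ hr2 h6
  · have : α = 0 := hα0
    rw [hα] at this
    linear_combination this
  · rw [hw]
    field_simp
    ring


lemma r2_ne (r : Fin 3 → ℂ) (hr : r ≠ 0) {x y : ℂ} (hx0 : x ≠ 0) (hxy : x ≠ y)
    (hx : dotProduct r (vec x) = 0) (hy : dotProduct r (vec y) = 0)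
    (hy0 : y ≠ 0) : r 2 ≠ 0 := by
  intro h2
  rw [dot_vec] at hx hy
  rw [h2] at hx hy
  have hx' : x * (r 1 * x + r 0) = 0 := by linear_combination hx
  have hy' : y * (r 1 * y + r 0) = 0 := by linear_combination hy
  have hx'' : r 1 * x + r 0 = 0 := by
    rcases mul_eq_zero.mp hx' with h | h
    · exact absurd h hx0
    · exact h
  have hy'' : r 1 * y + r 0 = 0 := by
    rcases mul_eq_zero.mp hy' with h | h
    · exact absurd h hy0
    · exact h
  have h1 : r 1 * (x - y) = 0 := by linear_combination hx'' - hy''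
  have hr1 : r 1 = 0 := by
    rcases mul_eq_zero.mp h1 with h | h
    · exact h
    · exact absurd (sub_eq_zero.mp h) hxy
  have hr0 : r 0 = 0 := by rw [hr1] at hx''; linear_combination hx''
  apply hr
  funext i
  fin_cases i <;> simp [hr0, hr1, h2]

lemma triple_classify (hζ : IsPrimitiveRoot ζ n) (Q : ProjPlane ℂ)
    (hm : mult (Set.range (Lmap (n := n) ζ)) Q = 3) :
    ∃ a b c : ZMod n, a ≠ b ∧ a ≠ c ∧ b ≠ c ∧ a + b + c = 0 ∧ Q = Psi ζ a b c := by
  rw [mult_eq hζ] at hm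
  obtain ⟨a, b, c, hab, hac, hbc, hset⟩ := Set.ncard_eq_three.mp hm
  have hmem : ∀ k : ZMod n, k ∈ ({a, b, c} : Set (ZMod n)) →
      dotProduct Q.rep (vec (f ζ k)) = 0 := by
    intro k hk
    rw [← hset] at hk
    exact hk
  have ha := hmem a (by simp)
  have hb := hmem b (by simp)
  have hc := hmem c (by simp)
  have hxy : f ζ a ≠ f ζ b := fun h => hab (f_inj hζ h)
  have hr2 : Q.rep 2 ≠ 0 :=
    r2_ne Q.rep (Projectivization.rep_nonzero Q) (f_ne_zero hζ a) hxy ha hb (f_ne_zero hζ b)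
  obtain ⟨w, hid, hprod, h0, h1⟩ := factor Q.rep hr2 hxy ha hb
  have hcw : f ζ c = w := by
    have h := hid (f ζ c)
    rw [hc] at h
    have h' := (mul_eq_zero.mp h.symm).resolve_left hr2
    rcases mul_eq_zero.mp h' with h'' | h''
    · rcases mul_eq_zero.mp h'' with h3 | h3
      · exact absurd (f_inj hζ (sub_eq_zero.mp h3)).symm hac
      · exact absurd (f_inj hζ (sub_eq_zero.mp h3)).symm hbc
    · exact sub_eq_zero.mp h''
  rw [← hcw] at hprod h0 h1
  have hsum : a + b + c = 0 := by
    apply f_inj hζ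
    rw [f_add hζ, f_add hζ, f_zero hζ]
    exact hprod
  refine ⟨a, b, c, hab, hac, hbc, hsum, ?_⟩
  conv_lhs => rw [← Projectivization.mk_rep Q]
  rw [Psi, Projectivization.mk_eq_mk_iff]
  refine ⟨Units.mk0 (Q.rep 2) hr2, ?_⟩
  funext i
  fin_cases i <;>
    simp [pt, Units.smul_def, smul_eq_mul, h0, h1] <;> ring


lemma rootset_rep (hζ : IsPrimitiveRoot ζ n) (u : Fin 3 → ℂ) (hu : u ≠ 0) :
    {k : ZMod n | dotProduct (Projectivization.mk ℂ u hu).rep (vec (f ζ k)) = 0}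
      = {k : ZMod n | dotProduct u (vec (f ζ k)) = 0} := by
  obtain ⟨c, hc⟩ := exists_smul_rep u hu
  ext k
  rw [Set.mem_setOf_eq, Set.mem_setOf_eq, hc, smul_dotProduct]
  simp [smul_eq_mul, Units.ne_zero c]

lemma rootset_pt (hζ : IsPrimitiveRoot ζ n) {a b c : ZMod n} (hsum : a + b + c = 0) :
    {k : ZMod n | dotProduct (pt (f ζ a) (f ζ b) (f ζ c)) (vec (f ζ k)) = 0}
      = {a, b, c} := by
  have hprod := prod_f hζ hsum
  ext k
  rw [Set.mem_setOf_eq, dot_pt hprod]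
  simp only [mul_eq_zero, sub_eq_zero, Set.mem_insert_iff, Set.mem_singleton_iff]
  constructor
  · rintro ((h | h) | h)
    · exact Or.inl (f_inj hζ h)
    · exact Or.inr (Or.inl (f_inj hζ h))
    · exact Or.inr (Or.inr (f_inj hζ h))
  · rintro (rfl | rfl | rfl)
    · exact Or.inl (Or.inl rfl)
    · exact Or.inl (Or.inr rfl)
    · exact Or.inr rfl

lemma rootset_Psi (hζ : IsPrimitiveRoot ζ n) {a b c : ZMod n} (hsum : a + b + c = 0) :
    {k : ZMod n | dotProduct (Psi ζ a b c).rep (vec (f ζ k)) = 0} = {a, b, c} := by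
  rw [Psi, rootset_rep hζ, rootset_pt hζ hsum]

lemma Psi_perm_eq (hζ : IsPrimitiveRoot ζ n) {a b c a' b' c' : ZMod n}
    (hsum : a + b + c = 0) (hsum' : a' + b' + c' = 0)
    (h : Psi ζ a b c = Psi ζ a' b' c') :
    ({a, b, c} : Set (ZMod n)) = {a', b', c'} := by
  rw [← rootset_Psi hζ hsum, ← rootset_Psi hζ hsum', h]

def Delta (ζ : ℂ) (a : ZMod n) : ProjPlane ℂ := Psi ζ a a (-(a + a))

lemma rootset_Delta (hζ : IsPrimitiveRoot ζ n) (a : ZMod n) :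
    {k : ZMod n | dotProduct (Delta ζ a).rep (vec (f ζ k)) = 0}
      = {a, -(a + a)} := by
  rw [Delta, rootset_Psi hζ (by ring)]
  ext k
  simp only [Set.mem_insert_iff, Set.mem_singleton_iff]
  tauto

lemma mult_Delta (hζ : IsPrimitiveRoot ζ n) {a : ZMod n} (ha : a + a + a ≠ 0) :
    mult (Set.range (Lmap (n := n) ζ)) (Delta ζ a) = 2 := by
  rw [mult_eq hζ, rootset_Delta hζ]
  rw [Set.ncard_pair]
  intro h
  apply ha
  linear_combination h

lemma Delta_inj (hζ : IsPrimitiveRoot ζ n)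
    (hcan2 : ∀ x y : ZMod n, x + x = y + y → x = y)
    {a a' : ZMod n} (ha : a + a + a ≠ 0) (ha' : a' + a' + a' ≠ 0)
    (h : Delta ζ a = Delta ζ a') : a = a' := by
  have hs : ({a, -(a + a)} : Set (ZMod n)) = {a', -(a' + a')} := by
    rw [← rootset_Delta hζ a, ← rootset_Delta hζ a', h]
  have h1 : a ∈ ({a', -(a' + a')} : Set (ZMod n)) := by
    rw [← hs]; simp
  have h2 : -(a + a) ∈ ({a', -(a' + a')} : Set (ZMod n)) := by
    rw [← hs]; simp
  simp only [Set.mem_insert_iff, Set.mem_singleton_iff] at h1 h2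
  rcases h1 with rfl | h1
  · rfl
  · rcases h2 with h2 | h2
    · -- a = -(a'+a'), -(a+a) = a'  ⇒ a = -( -(a+a) + -(a+a)) = ... ⇒ 3a = 0
      exfalso
      apply ha
      rw [h1] at h2
      -- h2 : -(-(a'+a') + -(a'+a')) = a'
      have : a' + a' + a' = 0 := by linear_combination h2
      exact absurd this ha'
    · -- -(a+a) = -(a'+a') ⇒ a = a' by cancellation
      have := hcan2 a a' (by linear_combination -h2)
      exact this

lemma double_classify (hζ : IsPrimitiveRoot ζ n) (Q : ProjPlane ℂ)
    (hm : mult (Set.range (Lmap (n := n) ζ)) Q = 2) :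
    ∃ a : ZMod n, a + a + a ≠ 0 ∧ Q = Delta ζ a := by
  rw [mult_eq hζ] at hm
  obtain ⟨a, b, hab, hset⟩ := Set.ncard_eq_two.mp hm
  have hmem : ∀ k : ZMod n, k ∈ ({a, b} : Set (ZMod n)) →
      dotProduct Q.rep (vec (f ζ k)) = 0 := by
    intro k hk
    rw [← hset] at hk
    exact hk
  have ha := hmem a (by simp)
  have hb := hmem b (by simp)
  have hxy : f ζ a ≠ f ζ b := fun h => hab (f_inj hζ h)
  have hr2 : Q.rep 2 ≠ 0 :=
    r2_ne Q.rep (Projectivization.rep_nonzero Q) (f_ne_zero hζ a) hxy ha hb (f_ne_zero hζ b)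
  obtain ⟨w, hid, hprod, h0, h1⟩ := factor Q.rep hr2 hxy ha hb
  -- w = f ζ (-a-b)
  have hprod2 : f ζ a * f ζ b * f ζ (-a - b) = 1 := prod_f hζ (by ring)
  have hwc : w = f ζ (-a - b) := by
    have hxyne : f ζ a * f ζ b ≠ 0 := mul_ne_zero (f_ne_zero hζ a) (f_ne_zero hζ b)
    apply mul_left_cancel₀ hxyne
    rw [show f ζ a * f ζ b * w = f ζ a * f ζ b * w from rfl]
    calc f ζ a * f ζ b * w = 1 := hprod
    _ = f ζ a * f ζ b * f ζ (-a - b) := hprod2.symm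
  -- -a-b is a root, hence in {a, b}
  have hroot : dotProduct Q.rep (vec (f ζ (-a - b))) = 0 := by
    rw [hid (f ζ (-a - b)), ← hwc]
    ring
  have hmem2 : (-a - b) ∈ ({a, b} : Set (ZMod n)) := by
    rw [← hset]
    exact hroot
  simp only [Set.mem_insert_iff, Set.mem_singleton_iff] at hmem2
  rcases hmem2 with hca | hcb
  · -- -a-b = a, so b = -(a+a), doubled root is x = f a
    have hbval : b = -(a + a) := by linear_combination -hca
    have hwx : w = f ζ a := by rw [hwc, show -a - b = a by linear_combination hca]
    subst hbval
    have h3a : a + a + a ≠ 0 := by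
      intro h3
      apply hab
      linear_combination h3
    refine ⟨a, h3a, ?_⟩
    rw [hwx] at h0 h1
    conv_lhs => rw [← Projectivization.mk_rep Q]
    rw [Delta, Psi, Projectivization.mk_eq_mk_iff]
    refine ⟨Units.mk0 (Q.rep 2) hr2, ?_⟩
    funext i
    fin_cases i <;>
      simp [pt, Units.smul_def, smul_eq_mul, h0, h1] <;> ring
  · -- -a-b = b, so a = -(b+b), doubled root is y = f b
    have haval : a = -(b + b) := by linear_combination -hcb
    have hwy : w = f ζ b := by rw [hwc, show -a - b = b by linear_combination hcb]
    subst haval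
    have h3b : b + b + b ≠ 0 := by
      intro h3
      apply hab
      linear_combination -h3
    refine ⟨b, h3b, ?_⟩
    rw [hwy] at h0 h1
    conv_lhs => rw [← Projectivization.mk_rep Q]
    rw [Delta, Psi, Projectivization.mk_eq_mk_iff]
    refine ⟨Units.mk0 (Q.rep 2) hr2, ?_⟩
    funext i
    fin_cases i <;>
      simp [pt, Units.smul_def, smul_eq_mul, h0, h1] <;> ring


variable (n) in
def Otriples : Finset (ZMod n × ZMod n × ZMod n) :=
  Finset.univ.filter
    (fun x => x.1 + x.2.1 + x.2.2 = 0 ∧ x.1 ≠ x.2.1 ∧ x.1 ≠ x.2.2 ∧ x.2.1 ≠ x.2.2)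

lemma card_Otriples (h2 : ∃ u : ZMod n, 2 * u = 1)
    (h3 : ∀ a : ZMod n, a + a + a = 0 → a = 0) (hn : 3 < n) :
    (Otriples n).card = (n - 1) * (n - 2) := by
  classical
  obtain ⟨u, hu⟩ := h2
  set F : ZMod n → Finset (ZMod n) :=
    fun a => Finset.univ.filter (fun b => b ≠ a ∧ b ≠ -(a + a) ∧ -(b + b) ≠ a) with hF
  have hcard : (Otriples n).card = (Finset.univ.sigma F).card := by
    apply Finset.card_nbij' (fun x => ⟨x.1, x.2.1⟩) (fun y => (y.1, y.2, -y.1 - y.2))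
    · rintro ⟨a, b, c⟩ hx
      rw [Otriples, Finset.mem_coe, Finset.mem_filter] at hx
      obtain ⟨-, hsum, hab, hac, hbc⟩ := hx
      have hc : c = -a - b := by linear_combination hsum
      subst hc
      rw [Finset.mem_coe, Finset.mem_sigma, hF]
      refine ⟨Finset.mem_univ _, ?_⟩
      rw [Finset.mem_filter]
      refine ⟨Finset.mem_univ _, fun h => hab h.symm, fun h => hac ?_, fun h => hbc ?_⟩
      · linear_combination h
      · linear_combination -h
    · rintro ⟨a, b⟩ hy
      rw [Finset.mem_coe, Finset.mem_sigma, hF, Finset.mem_filter] at hy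
      obtain ⟨-, -, hba, h1, h2⟩ := hy
      rw [Otriples, Finset.mem_coe, Finset.mem_filter]
      refine ⟨Finset.mem_univ _, by ring, fun h => hba h.symm, fun h => h1 ?_, fun h => h2 ?_⟩
      · linear_combination h
      · linear_combination -h
    · rintro ⟨a, b, c⟩ hx
      rw [Otriples, Finset.mem_coe, Finset.mem_filter] at hx
      obtain ⟨-, hsum, -, -, -⟩ := hx
      have hc : c = -a - b := by linear_combination hsum
      simp [hc]
    · rintro ⟨a, b⟩ hy
      rfl
  rw [hcard, Finset.card_sigma]
  have hcardF : ∀ a : ZMod n, (F a).card = if a = 0 then n - 1 else n - 3 := by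
    intro a
    have key : (2 : ZMod n) * (u * a) = a := by
      rw [← mul_assoc, hu, one_mul]
    have hFa : F a = Finset.univ \ {a, -(a + a), -(u * a)} := by
      rw [hF]
      ext b
      simp only [Finset.mem_filter, Finset.mem_univ, true_and, Finset.mem_sdiff,
        Finset.mem_insert, Finset.mem_singleton]
      constructor
      · rintro ⟨hba, hb2, hb3⟩
        intro hmem
        rcases hmem with h | h | h
        · exact hba h
        · exact hb2 h
        · refine hb3 ?_
          rw [h]
          linear_combination key
      · intro hmem
        refine ⟨fun h => hmem (Or.inl h), fun h => hmem (Or.inr (Or.inl h)),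
          fun h => hmem (Or.inr (Or.inr ?_))⟩
        linear_combination -u * h - b * hu
    rw [hFa, Finset.card_sdiff_of_subset (Finset.subset_univ _)]
    rw [Finset.card_univ, ZMod.card]
    by_cases ha : a = 0
    · subst ha
      simp
    · have d1 : a ≠ -(a + a) := by
        intro h
        exact ha (h3 a (by linear_combination h))
      have d2 : a ≠ -(u * a) := by
        intro h
        exact ha (h3 a (by linear_combination -key + 2*h))
      have d3 : -(a + a) ≠ -(u * a) := by
        intro h
        exact ha (h3 a (by linear_combination key - 2*h))
      rw [if_neg ha]
      rw [Finset.card_insert_of_notMem (by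
          simp only [Finset.mem_insert, Finset.mem_singleton]
          push_neg
          exact ⟨d1, d2⟩),
        Finset.card_insert_of_notMem (by
          simp only [Finset.mem_singleton]
          exact d3), Finset.card_singleton]
  calc ∑ a : ZMod n, (F a).card
      = ∑ a : ZMod n, (if a = 0 then n - 1 else n - 3) := by
        exact Finset.sum_congr rfl (fun a _ => hcardF a)
    _ = (n - 1) * (n - 2) := by
        rw [← Finset.sum_erase_add _ _ (Finset.mem_univ (0 : ZMod n))]
        rw [if_pos rfl]
        have : ∀ a ∈ Finset.univ.erase (0 : ZMod n),
            (if a = 0 then n - 1 else n - 3) = n - 3 := by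
          intro a ha
          rw [if_neg (Finset.ne_of_mem_erase ha)]
        rw [Finset.sum_congr rfl this, Finset.sum_const,
          Finset.card_erase_of_mem (Finset.mem_univ _), Finset.card_univ, ZMod.card,
          smul_eq_mul]
        have h4 : 4 ≤ n := by omega
        rw [show n - 2 = (n - 3) + 1 by omega, Nat.mul_succ]


lemma mk_eq_of_vec_eq {u v : Fin 3 → ℂ} (h : u = v) (hu : u ≠ 0) (hv : v ≠ 0) :
    Projectivization.mk ℂ u hu = Projectivization.mk ℂ v hv := by
  subst h; rfl

lemma pt_perm₁ (x y z : ℂ) : pt x y z = pt x z y := by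
  funext i; fin_cases i <;> simp [pt] <;> ring

lemma pt_perm₂ (x y z : ℂ) : pt x y z = pt y x z := by
  funext i; fin_cases i <;> simp [pt] <;> ring

lemma Psi_perm₁ (ζ : ℂ) (a b c : ZMod n) : Psi ζ a b c = Psi ζ a c b :=
  mk_eq_of_vec_eq (pt_perm₁ _ _ _) _ _

lemma Psi_perm₂ (ζ : ℂ) (a b c : ZMod n) : Psi ζ a b c = Psi ζ b a c :=
  mk_eq_of_vec_eq (pt_perm₂ _ _ _) _ _

lemma Psi_perm₃ (ζ : ℂ) (a b c : ZMod n) : Psi ζ a b c = Psi ζ b c a := by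
  rw [Psi_perm₂]; exact Psi_perm₁ ζ b a c

lemma Psi_perm₄ (ζ : ℂ) (a b c : ZMod n) : Psi ζ a b c = Psi ζ c a b := by
  rw [Psi_perm₃, Psi_perm₃]

lemma Psi_perm₅ (ζ : ℂ) (a b c : ZMod n) : Psi ζ a b c = Psi ζ c b a := by
  rw [Psi_perm₁]; exact Psi_perm₃ ζ a c b

noncomputable def Tfin (n : ℕ) [NeZero n] (ζ : ℂ) : Finset (ProjPlane ℂ) :=
  letI := Classical.decEq (ProjPlane ℂ)
  (Otriples n).image (fun x => Psi ζ x.1 x.2.1 x.2.2)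

lemma card_Otriples_eq_six_mul (hζ : IsPrimitiveRoot ζ n) :
    (Otriples n).card = 6 * (Tfin n ζ).card := by
  classical
  rw [Finset.card_eq_sum_card_fiberwise
    (f := fun x : ZMod n × ZMod n × ZMod n => Psi ζ x.1 x.2.1 x.2.2)
    (t := Tfin n ζ) (fun x hx => by
      rw [Tfin]
      exact Finset.mem_image_of_mem _ hx)]
  rw [Finset.sum_congr rfl (fun Q hQ => ?_), Finset.sum_const, smul_eq_mul, mul_comm]
  -- show each fiber has exactly 6 elements
  rw [Tfin] at hQ
  obtain ⟨⟨a, b, c⟩, hmem, rfl⟩ := Finset.mem_image.mp hQ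
  have hO := hmem
  rw [Otriples, Finset.mem_filter] at hO
  obtain ⟨-, hsum, hab, hac, hbc⟩ := hO
  simp only at hsum hab hac hbc
  have hS : (Otriples n).filter
      (fun x : ZMod n × ZMod n × ZMod n => Psi ζ x.1 x.2.1 x.2.2 = Psi ζ a b c)
      = ({(a,b,c), (a,c,b), (b,a,c), (b,c,a), (c,a,b), (c,b,a)} :
          Finset (ZMod n × ZMod n × ZMod n)) := by
    ext ⟨x, y, z⟩
    simp only [Finset.mem_filter, Finset.mem_insert, Finset.mem_singleton,
      Prod.mk.injEq]
    constructor
    · rintro ⟨hxO, hPsi⟩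
      rw [Otriples, Finset.mem_filter] at hxO
      obtain ⟨-, hsum', hxy, hxz, hyz⟩ := hxO
      simp only at hsum' hxy hxz hyz
      have hsets := Psi_perm_eq hζ hsum' hsum hPsi
      have hx' : x ∈ ({a, b, c} : Set (ZMod n)) := by rw [← hsets]; simp
      have hy' : y ∈ ({a, b, c} : Set (ZMod n)) := by rw [← hsets]; simp
      have hz' : z ∈ ({a, b, c} : Set (ZMod n)) := by rw [← hsets]; simp
      simp only [Set.mem_insert_iff, Set.mem_singleton_iff] at hx' hy' hz'
      rcases hx' with rfl | rfl | rfl <;> rcases hy' with rfl | rfl | rfl <;>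
        rcases hz' with rfl | rfl | rfl <;> simp_all <;> tauto
    · have key : ∀ x y z : ZMod n, x + y + z = 0 → x ≠ y → x ≠ z → y ≠ z →
          Psi ζ x y z = Psi ζ a b c → (x, y, z) ∈ (Otriples n).filter
            (fun q : ZMod n × ZMod n × ZMod n => Psi ζ q.1 q.2.1 q.2.2 = Psi ζ a b c) := by
        intro x y z h1 h2 h3 h4 h5
        rw [Finset.mem_filter, Otriples, Finset.mem_filter]
        exact ⟨⟨Finset.mem_univ _, h1, h2, h3, h4⟩, h5⟩
      rintro (⟨rfl, rfl, rfl⟩ | ⟨rfl, rfl, rfl⟩ | ⟨rfl, rfl, rfl⟩ | ⟨rfl, rfl, rfl⟩ |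
        ⟨rfl, rfl, rfl⟩ | ⟨rfl, rfl, rfl⟩) <;>
        refine Finset.mem_filter.mp (key _ _ _ (by linear_combination hsum) ?_ ?_ ?_ ?_) <;>
        first
          | exact hab | exact hac | exact hbc
          | exact hab.symm | exact hac.symm | exact hbc.symm
          | rfl
          | exact Psi_perm₁ ζ _ _ _
          | exact Psi_perm₂ ζ _ _ _
          | exact Psi_perm₃ ζ _ _ _
          | exact Psi_perm₄ ζ _ _ _
          | exact Psi_perm₅ ζ _ _ _
  rw [hS]
  have hba := hab.symm
  have hca := hac.symm
  have hcb := hbc.symm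
  repeat rw [Finset.card_insert_of_notMem (by simp [Prod.ext_iff]; tauto)]
  simp

end MT

end MTsection

/-- For every prime `p ≥ 5` there is a configuration of `p²` pairwise distinct lines in
`ℙ²(ℂ)` with exactly `(p²-1)(p²-2)/6` triple points, exactly `p²-1` double points and no
point of multiplicity greater than `3`. -/
theorem many_triple_points (p : ℕ) (hp : p.Prime) (hp5 : 5 ≤ p) :
    ∃ lines : Set (ProjPlane ℂ),
      lines.ncard = p ^ 2 ∧
      {P : ProjPlane ℂ | mult lines P = 3}.ncard = (p ^ 2 - 1) * (p ^ 2 - 2) / 6 ∧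
      {P : ProjPlane ℂ | mult lines P = 2}.ncard = p ^ 2 - 1 ∧
      ∀ P : ProjPlane ℂ, mult lines P ≤ 3 := by
  have h25 : 25 ≤ p ^ 2 := by
    calc (25 : ℕ) = 5 ^ 2 := by norm_num
    _ ≤ p ^ 2 := Nat.pow_le_pow_left hp5 2
  have hn0 : p ^ 2 ≠ 0 := by omega
  haveI : NeZero (p ^ 2) := ⟨hn0⟩
  obtain ⟨ζ, hζ⟩ : ∃ ζ : ℂ, IsPrimitiveRoot ζ (p ^ 2) :=
    ⟨_, Complex.isPrimitiveRoot_exp (p ^ 2) hn0⟩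
  -- arithmetic facts
  have hcop2 : Nat.Coprime 2 (p ^ 2) :=
    Nat.Coprime.pow_right 2 ((Nat.coprime_primes Nat.prime_two hp).mpr (by omega))
  have hcop3 : Nat.Coprime 3 (p ^ 2) :=
    Nat.Coprime.pow_right 2 ((Nat.coprime_primes Nat.prime_three hp).mpr (by omega))
  have hu2 : IsUnit (2 : ZMod (p ^ 2)) := by
    have := (ZMod.isUnit_iff_coprime 2 (p ^ 2)).mpr hcop2
    simpa using this
  have hu3 : IsUnit (3 : ZMod (p ^ 2)) := by
    have := (ZMod.isUnit_iff_coprime 3 (p ^ 2)).mpr hcop3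
    simpa using this
  have h2 : ∃ u : ZMod (p ^ 2), 2 * u = 1 := hu2.exists_right_inv
  have h3tor : ∀ a : ZMod (p ^ 2), a + a + a = 0 → a = 0 := by
    obtain ⟨v, hv⟩ := hu3.exists_right_inv
    intro a h
    calc a = (3 * v) * a := by rw [hv, one_mul]
    _ = v * (a + a + a) := by ring
    _ = 0 := by rw [h, mul_zero]
  have hcan2 : ∀ x y : ZMod (p ^ 2), x + x = y + y → x = y := by
    obtain ⟨u, hu⟩ := h2
    intro x y h
    calc x = (2 * u) * x := by rw [hu, one_mul]
    _ = u * (x + x) := by ring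
    _ = u * (y + y) := by rw [h]
    _ = (2 * u) * y := by ring
    _ = y := by rw [hu, one_mul]
  -- modular arithmetic: 6 ∣ p^2 - 1
  have hdvd6 : 6 ∣ p ^ 2 - 1 := by
    have hodd : p % 2 = 1 := Nat.odd_iff.mp (hp.odd_of_ne_two (by omega))
    have h3p : p % 3 ≠ 0 := by
      intro h
      have := (Nat.prime_dvd_prime_iff_eq Nat.prime_three hp).mp (Nat.dvd_of_mod_eq_zero h)
      omega
    have hmod : p ^ 2 % 6 = (p % 6) ^ 2 % 6 := Nat.pow_mod p 2 6
    have hp6 : p % 6 = 1 ∨ p % 6 = 5 := by omega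
    rcases hp6 with h | h <;> rw [h] at hmod <;> norm_num at hmod <;> omega
  refine ⟨Set.range (MT.Lmap (n := p ^ 2) ζ), ?_, ?_, ?_, ?_⟩
  · rw [← Set.image_univ, Set.ncard_image_of_injective _ (MT.Lmap_inj hζ),
      Set.ncard_univ, Nat.card_eq_fintype_card, ZMod.card]
  · -- triple points
    classical
    have hT : {P : ProjPlane ℂ | mult (Set.range (MT.Lmap (n := p ^ 2) ζ)) P = 3}
        = ↑(MT.Tfin (p ^ 2) ζ) := by
      ext Q
      simp only [Set.mem_setOf_eq, Finset.mem_coe]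
      constructor
      · intro h
        obtain ⟨a, b, c, hab, hac, hbc, hsum, rfl⟩ := MT.triple_classify hζ Q h
        rw [MT.Tfin]
        exact Finset.mem_image.mpr ⟨(a, b, c), by
          rw [MT.Otriples, Finset.mem_filter]
          exact ⟨Finset.mem_univ _, hsum, hab, hac, hbc⟩, rfl⟩
      · intro h
        rw [MT.Tfin] at h
        obtain ⟨⟨a, b, c⟩, hmem, rfl⟩ := Finset.mem_image.mp h
        rw [MT.Otriples, Finset.mem_filter] at hmem
        obtain ⟨-, hsum, hab, hac, hbc⟩ := hmem
        exact MT.mult_Psi hζ hab hac hbc hsum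
    rw [hT, Set.ncard_coe_finset]
    have h6 := MT.card_Otriples_eq_six_mul hζ
    have hcardO := MT.card_Otriples h2 h3tor (by omega)
    rw [hcardO] at h6
    have hdvdM : 6 ∣ (p ^ 2 - 1) * (p ^ 2 - 2) := Dvd.dvd.mul_right hdvd6 _
    generalize hM : (p ^ 2 - 1) * (p ^ 2 - 2) = M at *
    omega
  · -- double points
    have hD : {P : ProjPlane ℂ | mult (Set.range (MT.Lmap (n := p ^ 2) ζ)) P = 2}
        = MT.Delta ζ '' {a : ZMod (p ^ 2) | a + a + a ≠ 0} := by
      ext Q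
      simp only [Set.mem_setOf_eq, Set.mem_image]
      constructor
      · intro h
        obtain ⟨a, ha, rfl⟩ := MT.double_classify hζ Q h
        exact ⟨a, ha, rfl⟩
      · rintro ⟨a, ha, rfl⟩
        exact MT.mult_Delta hζ ha
    have hinj : Set.InjOn (MT.Delta (n := p ^ 2) ζ) {a : ZMod (p ^ 2) | a + a + a ≠ 0} :=
      fun a ha a' ha' h => MT.Delta_inj hζ hcan2 ha ha' h
    rw [hD, Set.ncard_image_of_injOn hinj]
    have hsetEq : {a : ZMod (p ^ 2) | a + a + a ≠ 0} = {a : ZMod (p ^ 2) | a ≠ 0} := by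
      ext a
      simp only [Set.mem_setOf_eq]
      constructor
      · intro h ha
        subst ha
        exact h (by ring)
      · intro ha h
        exact ha (h3tor a h)
    rw [hsetEq]
    have hins : insert (0 : ZMod (p ^ 2)) {a : ZMod (p ^ 2) | a ≠ 0} = Set.univ := by
      ext a
      by_cases h : a = 0 <;> simp [h]
    have h0nm : (0 : ZMod (p ^ 2)) ∉ {a : ZMod (p ^ 2) | a ≠ 0} := by simp
    have hcount := Set.ncard_insert_of_notMem h0nm (Set.toFinite _)
    rw [hins, Set.ncard_univ, Nat.card_eq_fintype_card, ZMod.card] at hcount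
    omega
  · intro P
    rw [MT.mult_eq hζ]
    exact MT.ncard_roots_le P.rep (Projectivization.rep_nonzero P) hζ
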